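/- Let N ≥ 1 be an integer, p ∈ (0,1) with N p(1−p) ≥ 2, and let w ∼ Bin(N−1, p). Then E[ 1/((w+1)(w+2)) − (2/(N p(1−p)))·1/(w+1) ] ≤ 1/(Np)² − 2/(N² p² (1−p)). -/

import Mathlib

/-- The probability mass function of the binomial distribution `Bin(N, p)` at `j`. -/
noncomputable def binomPMF (N : ℕ) (p : ℝ) (j : ℕ) : ℝ :=
  (N.choose j : ℝ) * p ^ j * (1 - p) ^ (N - j)

lemma binom_sum (M : ℕ) (p : ℝ) :
    ∑ k ∈ Finset.range (M + 1), p ^ k * (1 - p) ^ (M - k) * (M.choose k : ℝ) = 1 := by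
  have h := add_pow p (1 - p) M
  simp only [add_sub_cancel, one_pow] at h
  linarith [h]

lemma sum_shift1 (N : ℕ) (p : ℝ) :
    ∑ j ∈ Finset.range N, p ^ (j + 1) * (1 - p) ^ (N - (j + 1)) * (N.choose (j + 1) : ℝ)
      = 1 - (1 - p) ^ N := by
  have h := binom_sum N p
  rw [Finset.sum_range_succ'] at h
  simp only [Nat.choose_zero_right, Nat.cast_one, pow_zero, Nat.sub_zero, one_mul, mul_one] at h
  linarith

lemma sum_shift2 (N : ℕ) (p : ℝ) :
    ∑ j ∈ Finset.range N, p ^ (j + 2) * (1 - p) ^ (N - (j + 1)) * ((N + 1).choose (j + 2) : ℝ)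
      = 1 - (1 - p) ^ (N + 1) - ((N : ℝ) + 1) * p * (1 - p) ^ N := by
  have h := binom_sum (N + 1) p
  rw [Finset.sum_range_succ', Finset.sum_range_succ'] at h
  norm_num at h
  have h2 : ∑ j ∈ Finset.range N, p ^ (j + 2) * (1 - p) ^ (N - (j + 1)) * ((N + 1).choose (j + 2) : ℝ)
      = ∑ j ∈ Finset.range N, p ^ (j + 1 + 1) * (1 - p) ^ (N - (j + 1)) * ((N + 1).choose (j + 1 + 1) : ℝ) := by
    apply Finset.sum_congr rfl
    intro j _
    norm_num
  rw [h2]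
  push_cast at h
  linarith

lemma choose_id1 (N j : ℕ) (hN : 1 ≤ N) :
    ((N : ℝ)) * ((N - 1).choose j : ℝ) = (N.choose (j + 1) : ℝ) * ((j : ℝ) + 1) := by
  have h := Nat.add_one_mul_choose_eq (N - 1) j
  have hN1 : N - 1 + 1 = N := Nat.sub_add_cancel hN
  rw [hN1] at h
  exact_mod_cast h

lemma choose_id2 (N j : ℕ) :
    ((N : ℝ) + 1) * (N.choose (j + 1) : ℝ) = ((N + 1).choose (j + 2) : ℝ) * ((j : ℝ) + 2) := by
  have h := Nat.add_one_mul_choose_eq N (j + 1)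
  have := congrArg (Nat.cast (R := ℝ)) h
  push_cast at this
  linarith

lemma expect_inv (N : ℕ) (hN : 1 ≤ N) (p : ℝ) (hp : 0 < p) :
    ∑ j ∈ Finset.range N, binomPMF (N - 1) p j * (1 / ((j : ℝ) + 1))
      = (1 - (1 - p) ^ N) / ((N : ℝ) * p) := by
  have hNp : (N : ℝ) * p ≠ 0 := by positivity
  rw [eq_div_iff hNp, Finset.sum_mul, ← sum_shift1 N p]
  apply Finset.sum_congr rfl
  intro j hj
  have hj1 : ((j : ℝ) + 1) ≠ 0 := by positivity
  have hc := choose_id1 N j hN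
  have he : N - 1 - j = N - (j + 1) := by omega
  unfold binomPMF
  rw [he, mul_one_div, div_mul_eq_mul_div, div_eq_iff hj1]
  linear_combination (p ^ (j + 1) * (1 - p) ^ (N - (j + 1))) * hc

lemma expect_inv2 (N : ℕ) (hN : 1 ≤ N) (p : ℝ) (hp : 0 < p) :
    ∑ j ∈ Finset.range N, binomPMF (N - 1) p j * (1 / (((j : ℝ) + 1) * ((j : ℝ) + 2)))
      = (1 - (1 - p) ^ (N + 1) - ((N : ℝ) + 1) * p * (1 - p) ^ N)
        / ((N : ℝ) * ((N : ℝ) + 1) * p ^ 2) := by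
  have hNp : (N : ℝ) * ((N : ℝ) + 1) * p ^ 2 ≠ 0 := by positivity
  rw [eq_div_iff hNp, Finset.sum_mul, ← sum_shift2 N p]
  apply Finset.sum_congr rfl
  intro j hj
  have hj12 : (((j : ℝ) + 1) * ((j : ℝ) + 2)) ≠ 0 := by positivity
  have hc1 := choose_id1 N j hN
  have hc2 := choose_id2 N j
  have hc3 : (N : ℝ) * ((N : ℝ) + 1) * ((N - 1).choose j : ℝ)
      = ((N + 1).choose (j + 2) : ℝ) * (((j : ℝ) + 1) * ((j : ℝ) + 2)) := by
    linear_combination ((N : ℝ) + 1) * hc1 + ((j : ℝ) + 1) * hc2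
  have he : N - 1 - j = N - (j + 1) := by omega
  unfold binomPMF
  rw [he, mul_one_div, div_mul_eq_mul_div, div_eq_iff hj12]
  linear_combination (p ^ (j + 2) * (1 - p) ^ (N - (j + 1))) * hc3

theorem binomial_expectation_second_order_bound
    (N : ℕ) (hN : 1 ≤ N) (p : ℝ) (hp : 0 < p) (hp1 : p < 1)
    (hNp : 2 ≤ (N : ℝ) * p * (1 - p)) :
    ∑ j ∈ Finset.range N, binomPMF (N - 1) p j *
        (1 / (((j : ℝ) + 1) * ((j : ℝ) + 2))
          - (2 / ((N : ℝ) * p * (1 - p))) * (1 / ((j : ℝ) + 1)))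
      ≤ 1 / ((N : ℝ) * p) ^ 2 - 2 / ((N : ℝ) ^ 2 * p ^ 2 * (1 - p)) := by
  have hq : 0 < 1 - p := by linarith
  have hn : (1 : ℝ) ≤ (N : ℝ) := by exact_mod_cast hN
  have hsplit : ∑ j ∈ Finset.range N, binomPMF (N - 1) p j *
        (1 / (((j : ℝ) + 1) * ((j : ℝ) + 2))
          - (2 / ((N : ℝ) * p * (1 - p))) * (1 / ((j : ℝ) + 1)))
      = (∑ j ∈ Finset.range N, binomPMF (N - 1) p j * (1 / (((j : ℝ) + 1) * ((j : ℝ) + 2))))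
        - (2 / ((N : ℝ) * p * (1 - p))) *
          (∑ j ∈ Finset.range N, binomPMF (N - 1) p j * (1 / ((j : ℝ) + 1))) := by
    rw [Finset.mul_sum, ← Finset.sum_sub_distrib]
    apply Finset.sum_congr rfl
    intro j _
    ring
  rw [hsplit, expect_inv N hN p hp, expect_inv2 N hN p hp]
  set q := 1 - p with hqdef
  set n := (N : ℝ) with hndef
  have hx : 0 ≤ q ^ (N - 1) := by positivity
  set x := q ^ (N - 1) with hxdef
  have hqN : q ^ N = x * q := by
    rw [hxdef, ← pow_succ]
    congr 1
    omega
  have hqN1 : q ^ (N + 1) = x * q ^ 2 := by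
    rw [hxdef, ← pow_add]
    congr 1
    omega
  rw [hqN, hqN1, ← sub_nonneg]
  have hcoef : 0 ≤ n * q ^ 2 + n * (n + 1) * p * q - 2 * (n + 1) := by nlinarith [sq_nonneg q]
  have hkey : 1 / (n * p) ^ 2 - 2 / (n ^ 2 * p ^ 2 * q) -
      ((1 - x * q ^ 2 - (n + 1) * p * (x * q)) / (n * (n + 1) * p ^ 2)
        - 2 / (n * p * q) * ((1 - x * q) / (n * p)))
      = q * (1 + x * (n * q ^ 2 + n * (n + 1) * p * q - 2 * (n + 1)))
        / (n ^ 2 * (n + 1) * p ^ 2 * q) := by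
    have h1 : (0:ℝ) < n := by linarith
    field_simp
    ring
  rw [hkey]
  have h2 : 0 ≤ 1 + x * (n * q ^ 2 + n * (n + 1) * p * q - 2 * (n + 1)) := by
    nlinarith [mul_nonneg hx hcoef]
  positivity
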